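/- Let a < b, let V be a finite-dimensional subspace of C¹([a,b];ℝ), and let V₀ be a finite-dimensional subspace of C¹([a,b];ℝ) all of whose elements vanish at a and b. Denote by P and P₀ the L²(a,b)-orthogonal projections onto V and V₀ respectively. Let η̃ : [0,T] → V and ũ : [0,T] → V₀ be continuously differentiable curves satisfying, for every t ∈ [0,T]: (i) for all χ ∈ V, ∫_a^b η̃_t χ dx + (1/6) ∫_a^b (d/dt P₀[η̃_x]) χ' dx = ∫_a^b P₀[(1+η̃)ũ] χ' dx; and (ii) for all ψ ∈ V₀, ∫_a^b ũ_t ψ dx + (1/6) ∫_a^b (d/dt P[ũ_x]) ψ' dx = (1/2) ∫_a^b P[ũ²] ψ' dx + ∫_a^b P[η̃] ψ' dx. Then the semidiscrete energy E(t) := (1/2) ∫_a^b ( η̃² + (1+η̃) ũ² ) dx is constant on [0,T]. -/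

import Mathlib

open MeasureTheory Filter Set

set_option linter.unusedSectionVars false

namespace BBMAux

lemma exists_separating (W : Submodule ℝ (ℝ → ℝ)) [FiniteDimensional ℝ W] :
    ∃ s : Finset ℝ, ∀ v : W, (∀ x ∈ s, (v : ℝ → ℝ) x = 0) → v = 0 := by
  classical
  let K : Finset ℝ → Submodule ℝ W := fun s =>
    ⨅ x ∈ s, LinearMap.ker ((LinearMap.proj x).comp W.subtype)
  have hmem : ∀ (s : Finset ℝ) (v : W), v ∈ K s ↔ ∀ x ∈ s, (v : ℝ → ℝ) x = 0 := by
    intro s v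
    simp [K, Submodule.mem_iInf, LinearMap.mem_ker]
  obtain ⟨s, hs⟩ : ∃ s : Finset ℝ,
      Module.finrank ℝ (K s) = sInf {n | ∃ s, Module.finrank ℝ (K s) = n} :=
    Nat.sInf_mem (⟨Module.finrank ℝ (K ∅), ∅, rfl⟩ :
      {n | ∃ s, Module.finrank ℝ (K s) = n}.Nonempty)
  refine ⟨s, ?_⟩
  intro v hv
  by_contra hvne
  have hvK : v ∈ K s := (hmem s v).2 hv
  obtain ⟨x, hx⟩ : ∃ x, (v : ℝ → ℝ) x ≠ 0 := by
    by_contra h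
    push_neg at h
    exact hvne (Subtype.ext (funext h))
  have hle : K (insert x s) ≤ K s := by
    intro u hu
    exact (hmem s u).2 fun y hy => (hmem _ u).1 hu y (Finset.mem_insert_of_mem hy)
  have hlt : K (insert x s) < K s := by
    refine lt_of_le_of_ne hle ?_
    intro heq
    have : v ∈ K (insert x s) := heq ▸ hvK
    exact hx (((hmem _ v).1 this) x (Finset.mem_insert_self _ _))
  have hrk : Module.finrank ℝ (K (insert x s)) < Module.finrank ℝ (K s) :=
    Submodule.finrank_lt_finrank_of_lt hlt
  have hge : sInf {n | ∃ s, Module.finrank ℝ (K s) = n}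
      ≤ Module.finrank ℝ (K (insert x s)) :=
    Nat.sInf_le (Set.mem_setOf.2 ⟨insert x s, rfl⟩)
  omega

lemma exists_pointwise_rep (W : Submodule ℝ (ℝ → ℝ)) [FiniteDimensional ℝ W] :
    ∃ (s : Finset ℝ) (w : ℝ → ℝ → ℝ), (∀ x, w x ∈ W) ∧
      ∀ v ∈ W, ∀ y, v y = ∑ x ∈ s, v x * w x y := by
  classical
  obtain ⟨s, hs⟩ := exists_separating W
  let ev : W →ₗ[ℝ] (s → ℝ) := LinearMap.pi (fun x => (LinearMap.proj (x : ℝ)).comp W.subtype)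
  have hker : LinearMap.ker ev = ⊥ := by
    rw [Submodule.eq_bot_iff]
    intro v hv
    apply hs v
    intro x hx
    have := congrFun (LinearMap.mem_ker.1 hv) ⟨x, hx⟩
    simpa [ev] using this
  obtain ⟨g, hg⟩ := LinearMap.exists_leftInverse_of_injective ev hker
  let u : s → (s → ℝ) := fun i => fun j => if i = j then 1 else 0
  refine ⟨s, fun x => if hx : x ∈ s then (g (u ⟨x, hx⟩) : ℝ → ℝ) else 0, ?_, ?_⟩
  · intro x; dsimp only; split
    · exact Submodule.coe_mem _
    · exact W.zero_mem
  · intro v hv y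
    have h1 : (⟨v, hv⟩ : W) = g (ev ⟨v, hv⟩) := (LinearMap.congr_fun hg ⟨v, hv⟩).symm
    have h2 : ev ⟨v, hv⟩ = ∑ i : s, (v (i : ℝ)) • u i := by
      have := pi_eq_sum_univ (ev ⟨v, hv⟩)
      convert this using 2
      rfl
    have h3 : (⟨v, hv⟩ : W) = ∑ i : s, (v (i : ℝ)) • g (u i) := by
      rw [h1, h2, map_sum]
      simp [_root_.map_smul]
    have h4 : v y = ∑ i : s, v (i : ℝ) * (g (u i) : ℝ → ℝ) y := by
      have := congrArg (fun z : W => (z : ℝ → ℝ) y) h3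
      simpa [Submodule.coe_sum, Finset.sum_apply, smul_eq_mul] using this
    rw [h4, ← Finset.sum_coe_sort s]
    apply Finset.sum_congr rfl
    intro i _
    congr 1
    have : (fun x => if hx : x ∈ s then ((g (u ⟨x, hx⟩) : W) : ℝ → ℝ) else 0) (↑i : ℝ)
        = ((g (u i) : W) : ℝ → ℝ) := by
      simp only [dif_pos i.2, Subtype.coe_eta]
    rw [this]

/-- A curve of functions that is a finite sum of (C¹ coefficient) × (continuous profile). -/
def Rep (γ : ℝ → ℝ → ℝ) : Prop :=
  ∃ (ι : Type) (_ : Fintype ι) (g h : ι → ℝ → ℝ),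
    (∀ i, ContDiff ℝ 1 (g i)) ∧ (∀ i, Continuous (h i)) ∧
    ∀ t y, γ t y = ∑ i, g i t * h i y

lemma Rep.const (c : ℝ) : Rep (fun _ _ => c) :=
  ⟨PUnit, inferInstance, fun _ _ => c, fun _ _ => 1, fun _ => contDiff_const,
    fun _ => continuous_const, fun _ _ => by simp⟩

lemma Rep.ofFun {χ : ℝ → ℝ} (hχ : Continuous χ) : Rep (fun _ x => χ x) :=
  ⟨PUnit, inferInstance, fun _ _ => 1, fun _ => χ, fun _ => contDiff_const,
    fun _ => hχ, fun _ _ => by simp⟩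

lemma Rep.congr {γ₁ γ₂ : ℝ → ℝ → ℝ} (h : Rep γ₁) (he : ∀ t y, γ₁ t y = γ₂ t y) :
    Rep γ₂ := by
  obtain ⟨ι, i, g, f, hg, hf, hrep⟩ := h
  exact ⟨ι, i, g, f, hg, hf, fun t y => (he t y) ▸ hrep t y⟩

lemma Rep.add {γ₁ γ₂ : ℝ → ℝ → ℝ} (h₁ : Rep γ₁) (h₂ : Rep γ₂) :
    Rep (fun t x => γ₁ t x + γ₂ t x) := by
  obtain ⟨ι₁, i₁, g₁, f₁, hg₁, hf₁, he₁⟩ := h₁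
  obtain ⟨ι₂, i₂, g₂, f₂, hg₂, hf₂, he₂⟩ := h₂
  exact ⟨ι₁ ⊕ ι₂, inferInstance, Sum.elim g₁ g₂, Sum.elim f₁ f₂,
    fun i => by cases i <;> simp [hg₁, hg₂],
    fun i => by cases i <;> simp [hf₁, hf₂],
    fun t y => by simp [Fintype.sum_sum_type, he₁, he₂]⟩

lemma Rep.mul {γ₁ γ₂ : ℝ → ℝ → ℝ} (h₁ : Rep γ₁) (h₂ : Rep γ₂) :
    Rep (fun t x => γ₁ t x * γ₂ t x) := by
  obtain ⟨ι₁, i₁, g₁, f₁, hg₁, hf₁, he₁⟩ := h₁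
  obtain ⟨ι₂, i₂, g₂, f₂, hg₂, hf₂, he₂⟩ := h₂
  refine ⟨ι₁ × ι₂, inferInstance, fun p t => g₁ p.1 t * g₂ p.2 t,
    fun p y => f₁ p.1 y * f₂ p.2 y,
    fun p => (hg₁ p.1).mul (hg₂ p.2), fun p => (hf₁ p.1).mul (hf₂ p.2), fun t y => ?_⟩
  simp only
  rw [he₁, he₂, Finset.sum_mul_sum, Fintype.sum_prod_type]
  exact Finset.sum_congr rfl fun i _ => Finset.sum_congr rfl fun j _ => by ring

lemma Rep.contDiff_pt {γ : ℝ → ℝ → ℝ} (h : Rep γ) (x : ℝ) :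
    ContDiff ℝ 1 (fun t => γ t x) := by
  obtain ⟨ι, i, g, f, hg, hf, he⟩ := h
  have : (fun t => γ t x) = fun t => ∑ i, g i t * f i x := funext fun t => he t x
  rw [this]
  exact ContDiff.sum fun i _ => (hg i).mul contDiff_const

lemma Rep.hasDerivAt_pt {γ : ℝ → ℝ → ℝ} (h : Rep γ) (t x : ℝ) :
    HasDerivAt (fun s => γ s x) (deriv (fun s => γ s x) t) t :=
  (((h.contDiff_pt x).differentiable one_ne_zero) t).hasDerivAt

lemma Rep.continuous_x {γ : ℝ → ℝ → ℝ} (h : Rep γ) (t : ℝ) :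
    Continuous (fun x => γ t x) := by
  obtain ⟨ι, i, g, f, hg, hf, he⟩ := h
  have : (fun x => γ t x) = fun x => ∑ i, g i t * f i x := funext fun x => he t x
  rw [this]
  exact continuous_finset_sum _ fun i _ => continuous_const.mul (hf i)

/-- Differentiation under the integral sign for `Rep` curves. -/
lemma Rep.hasDerivAt_integral {γ : ℝ → ℝ → ℝ} (h : Rep γ) (a b t : ℝ) :
    HasDerivAt (fun τ => ∫ x in a..b, γ τ x)
      (∫ x in a..b, deriv (fun s => γ s x) t) t := by
  obtain ⟨ι, i, g, f, hg, hf, he⟩ := h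
  have hptd : ∀ x, HasDerivAt (fun s => γ s x) (∑ i, deriv (g i) t * f i x) t := by
    intro x
    have : (fun s => γ s x) = fun s => ∑ i, g i s * f i x := funext fun s => he s x
    rw [this]
    exact HasDerivAt.fun_sum fun i _ =>
      ((((hg i).differentiable one_ne_zero) t).hasDerivAt).mul_const (f i x)
  have hderiv_eq : (fun x => deriv (fun s => γ s x) t)
      = fun x => ∑ i, deriv (g i) t * f i x := funext fun x => (hptd x).deriv
  have hint_eq : (fun τ => ∫ x in a..b, γ τ x)
      = fun τ => ∑ i, g i τ * ∫ x in a..b, f i x := by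
    funext τ
    have h1 : (∫ x in a..b, γ τ x) = ∫ x in a..b, ∑ i, g i τ * f i x := by
      congr 1; funext x; exact he τ x
    rw [h1, intervalIntegral.integral_finset_sum]
    · exact Finset.sum_congr rfl fun i _ => intervalIntegral.integral_const_mul _ _
    · exact fun i _ => (continuous_const.mul (hf i)).intervalIntegrable _ _
  rw [hint_eq, hderiv_eq]
  have h2 : (∫ x in a..b, ∑ i, deriv (g i) t * f i x)
      = ∑ i, deriv (g i) t * ∫ x in a..b, f i x := by
    rw [intervalIntegral.integral_finset_sum]
    · exact Finset.sum_congr rfl fun i _ => intervalIntegral.integral_const_mul _ _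
    · exact fun i _ => (continuous_const.mul (hf i)).intervalIntegrable _ _
  rw [h2]
  exact HasDerivAt.fun_sum fun i _ =>
    ((((hg i).differentiable one_ne_zero) t).hasDerivAt).mul_const _

section Curve

variable {W : Submodule ℝ (ℝ → ℝ)} (hW : ∀ f ∈ W, ContDiff ℝ 1 f)
  {s : Finset ℝ} {w : ℝ → ℝ → ℝ} (hw : ∀ x, w x ∈ W)
  (hexp : ∀ v ∈ W, ∀ y, v y = ∑ x ∈ s, v x * w x y)
  (γ : ℝ → ℝ → ℝ) (hmem : ∀ t, γ t ∈ W) (hC1 : ∀ x, ContDiff ℝ 1 (fun t => γ t x))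

include hW hw hexp hmem hC1

lemma rep_curve : Rep γ :=
  ⟨{ x // x ∈ s }, inferInstance, fun i t => γ t (i : ℝ), fun i => w (i : ℝ),
    fun i => hC1 _, fun i => (hW _ (hw _)).continuous,
    fun t y => by rw [hexp (γ t) (hmem t) y, ← Finset.sum_coe_sort]⟩

lemma rep_derivx : Rep (fun t x => deriv (γ t) x) := by
  refine ⟨{ x // x ∈ s }, inferInstance, fun i t => γ t (i : ℝ),
    fun i => deriv (w (i : ℝ)), fun i => hC1 _,
    fun i => (hW _ (hw _)).continuous_deriv le_rfl, fun t y => ?_⟩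
  have h1 : γ t = fun z => ∑ x ∈ s, γ t x * w x z := funext (hexp (γ t) (hmem t))
  have h2 : HasDerivAt (fun z => ∑ x ∈ s, γ t x * w x z)
      (∑ x ∈ s, γ t x * deriv (w x) y) y :=
    HasDerivAt.fun_sum fun x _ =>
      ((((hW _ (hw x)).differentiable one_ne_zero) y).hasDerivAt).const_mul _
  show deriv (γ t) y = _
  conv_lhs => rw [h1]
  rw [h2.deriv, ← Finset.sum_coe_sort]

/-- pointwise time-derivative of the curve, as a sum -/
lemma pderiv_eq_sum (t : ℝ) : ∀ y, deriv (fun τ => γ τ y) t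
    = ∑ x ∈ s, deriv (fun τ => γ τ x) t * w x y := by
  intro y
  have h1 : (fun τ => γ τ y) = fun τ => ∑ x ∈ s, γ τ x * w x y := by
    funext τ; exact hexp (γ τ) (hmem τ) y
  have h2 : HasDerivAt (fun τ => ∑ x ∈ s, γ τ x * w x y)
      (∑ x ∈ s, deriv (fun τ => γ τ x) t * w x y) t :=
    HasDerivAt.fun_sum fun x _ =>
      ((((hC1 x).differentiable one_ne_zero) t).hasDerivAt).mul_const _
  rw [h1, h2.deriv]

lemma pderiv_mem (t : ℝ) : (fun y => deriv (fun τ => γ τ y) t) ∈ W := by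
  have h1 : (fun y => deriv (fun τ => γ τ y) t)
      = ∑ x ∈ s, (deriv (fun τ => γ τ x) t) • w x := by
    funext y
    rw [pderiv_eq_sum hW hw hexp γ hmem hC1 t y, Finset.sum_apply]
    simp [smul_eq_mul]
  rw [h1]
  exact Submodule.sum_mem _ fun x _ => Submodule.smul_mem _ _ (hw x)

/-- mixed partials commute -/
lemma mixed_partial (t x : ℝ) :
    deriv (fun y => deriv (fun τ => γ τ y) t) x = deriv (fun τ => deriv (γ τ) x) t := by
  have h1 : (fun y => deriv (fun τ => γ τ y) t)
      = fun y => ∑ x' ∈ s, deriv (fun τ => γ τ x') t * w x' y :=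
    funext (pderiv_eq_sum hW hw hexp γ hmem hC1 t)
  have h2 : HasDerivAt (fun y => ∑ x' ∈ s, deriv (fun τ => γ τ x') t * w x' y)
      (∑ x' ∈ s, deriv (fun τ => γ τ x') t * deriv (w x') x) x :=
    HasDerivAt.fun_sum fun x' _ =>
      ((((hW _ (hw x')).differentiable one_ne_zero) x).hasDerivAt).const_mul _
  have h3 : (fun τ => deriv (γ τ) x)
      = fun τ => ∑ x' ∈ s, γ τ x' * deriv (w x') x := by
    funext τ
    have ha : γ τ = fun z => ∑ x' ∈ s, γ τ x' * w x' z := funext (hexp (γ τ) (hmem τ))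
    have hb : HasDerivAt (fun z => ∑ x' ∈ s, γ τ x' * w x' z)
        (∑ x' ∈ s, γ τ x' * deriv (w x') x) x :=
      HasDerivAt.fun_sum fun x' _ =>
        ((((hW _ (hw x')).differentiable one_ne_zero) x).hasDerivAt).const_mul _
    conv_lhs => rw [ha]
    rw [hb.deriv]
  have h4 : HasDerivAt (fun τ => ∑ x' ∈ s, γ τ x' * deriv (w x') x)
      (∑ x' ∈ s, deriv (fun τ => γ τ x') t * deriv (w x') x) t :=
    HasDerivAt.fun_sum fun x' _ =>
      ((((hC1 x').differentiable one_ne_zero) t).hasDerivAt).mul_const _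
  rw [h1, h2.deriv, h3, h4.deriv]

end Curve

/-- integration by parts with zero boundary handled at use site -/
lemma ibp (a b : ℝ) (f g : ℝ → ℝ) (hf : ContDiff ℝ 1 f) (hg : ContDiff ℝ 1 g) :
    (∫ x in a..b, (deriv f x * g x + f x * deriv g x)) = f b * g b - f a * g a := by
  have hd : ∀ x ∈ Set.uIcc a b, HasDerivAt (fun y => f y * g y)
      (deriv f x * g x + f x * deriv g x) x := fun x _ =>
    ((hf.differentiable one_ne_zero x).hasDerivAt).mul ((hg.differentiable one_ne_zero x).hasDerivAt)
  exact intervalIntegral.integral_eq_sub_of_hasDerivAt hd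
    ((((hf.continuous_deriv le_rfl).mul hg.continuous).add
      (hf.continuous.mul (hg.continuous_deriv le_rfl))).intervalIntegrable _ _)

lemma integral_split2 (a b : ℝ) (f g : ℝ → ℝ) (hf : Continuous f) (hg : Continuous g) :
    (∫ x in a..b, (f x + g x)) = (∫ x in a..b, f x) + ∫ x in a..b, g x :=
  intervalIntegral.integral_add (hf.intervalIntegrable _ _) (hg.intervalIntegrable _ _)

lemma integral_combo2 (a b : ℝ) (f g : ℝ → ℝ) (cf cg : ℝ)
    (hf : Continuous f) (hg : Continuous g) :
    (∫ x in a..b, (cf * f x + cg * g x))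
      = cf * (∫ x in a..b, f x) + cg * ∫ x in a..b, g x := by
  rw [integral_split2 a b (fun x => cf * f x) (fun x => cg * g x) (continuous_const.mul hf) (continuous_const.mul hg),
    intervalIntegral.integral_const_mul, intervalIntegral.integral_const_mul]

lemma integral_combo3 (a b : ℝ) (f g h : ℝ → ℝ) (cf cg ch : ℝ)
    (hf : Continuous f) (hg : Continuous g) (hh : Continuous h) :
    (∫ x in a..b, (cf * f x + cg * g x + ch * h x))
      = cf * (∫ x in a..b, f x) + cg * (∫ x in a..b, g x) + ch * ∫ x in a..b, h x := by
  rw [integral_split2 a b (fun x => cf * f x + cg * g x) (fun x => ch * h x) ((continuous_const.mul hf).add (continuous_const.mul hg))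
      (continuous_const.mul hh),
    integral_combo2 a b f g cf cg hf hg, intervalIntegral.integral_const_mul]

lemma integral_funcongr (a b : ℝ) {f g : ℝ → ℝ} (h : ∀ x, f x = g x) :
    (∫ x in a..b, f x) = ∫ x in a..b, g x := by
  congr 1; funext x; exact h x

end BBMAux


/-- Conservation of the semidiscrete energy `E(t) = (1/2) ∫_a^b ( ηh² + (1+ηh) uh² ) dx`
for the modified (conservative) Galerkin semidiscretisation of the nondimensional
BBM-BBM system with reflective boundary conditions. Here `P`, `P₀` are the `L²(a,b)`
orthogonal projections onto the finite-dimensional subspaces `V ⊆ C¹` and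
`V₀ ⊆ C¹` (whose elements vanish at the endpoints), characterised by membership
together with the orthogonality relations. -/
theorem energy_conservation_conservative_galerkin_reflective
    (a b T : ℝ) (hab : a < b)
    (V V₀ : Submodule ℝ (ℝ → ℝ))
    (hVfin : FiniteDimensional ℝ V) (hV₀fin : FiniteDimensional ℝ V₀)
    (hVC1 : ∀ f ∈ V, ContDiff ℝ 1 f)
    (hV₀C1 : ∀ f ∈ V₀, ContDiff ℝ 1 f)
    (hV₀bc : ∀ f ∈ V₀, f a = 0 ∧ f b = 0)
    (P P₀ : (ℝ → ℝ) → (ℝ → ℝ))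
    (hPmem : ∀ f : ℝ → ℝ, P f ∈ V) (hP₀mem : ∀ f : ℝ → ℝ, P₀ f ∈ V₀)
    (hPproj : ∀ f : ℝ → ℝ, ∀ χ ∈ V,
      (∫ x in a..b, P f x * χ x) = ∫ x in a..b, f x * χ x)
    (hP₀proj : ∀ f : ℝ → ℝ, ∀ ψ ∈ V₀,
      (∫ x in a..b, P₀ f x * ψ x) = ∫ x in a..b, f x * ψ x)
    (ηh uh : ℝ → ℝ → ℝ)
    (hηmem : ∀ t : ℝ, ηh t ∈ V) (humem : ∀ t : ℝ, uh t ∈ V₀)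
    (hηC1 : ∀ x : ℝ, ContDiff ℝ 1 (fun t => ηh t x))
    (huC1 : ∀ x : ℝ, ContDiff ℝ 1 (fun t => uh t x))
    (hηxC1 : ∀ x : ℝ, ContDiff ℝ 1 (fun t => P₀ (fun y => deriv (ηh t) y) x))
    (huxC1 : ∀ x : ℝ, ContDiff ℝ 1 (fun t => P (fun y => deriv (uh t) y) x))
    (heq1 : ∀ t ∈ Set.Icc (0 : ℝ) T, ∀ χ ∈ V,
      (∫ x in a..b, deriv (fun s => ηh s x) t * χ x)
          + 1 / 6 * ∫ x in a..b,
              deriv (fun s => P₀ (fun y => deriv (ηh s) y) x) t * deriv χ x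
        = ∫ x in a..b, P₀ (fun y => (1 + ηh t y) * uh t y) x * deriv χ x)
    (heq2 : ∀ t ∈ Set.Icc (0 : ℝ) T, ∀ ψ ∈ V₀,
      (∫ x in a..b, deriv (fun s => uh s x) t * ψ x)
          + 1 / 6 * ∫ x in a..b,
              deriv (fun s => P (fun y => deriv (uh s) y) x) t * deriv ψ x
        = 1 / 2 * (∫ x in a..b, P (fun y => uh t y ^ 2) x * deriv ψ x)
            + ∫ x in a..b, P (ηh t) x * deriv ψ x) :
    ∀ t₁ ∈ Set.Icc (0 : ℝ) T, ∀ t₂ ∈ Set.Icc (0 : ℝ) T,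
      (1 / 2) * (∫ x in a..b, (ηh t₁ x ^ 2 + (1 + ηh t₁ x) * uh t₁ x ^ 2))
        = (1 / 2) * ∫ x in a..b, (ηh t₂ x ^ 2 + (1 + ηh t₂ x) * uh t₂ x ^ 2) := by
  classical
  obtain ⟨s₁, w₁, hw₁, hx₁⟩ := BBMAux.exists_pointwise_rep V
  obtain ⟨s₀, w₀, hw₀, hx₀⟩ := BBMAux.exists_pointwise_rep V₀
  have repη : BBMAux.Rep ηh := BBMAux.rep_curve hVC1 hw₁ hx₁ ηh hηmem hηC1
  have repu : BBMAux.Rep uh := BBMAux.rep_curve hV₀C1 hw₀ hx₀ uh humem huC1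
  have repθ : BBMAux.Rep (fun τ x => P₀ (fun y => deriv (ηh τ) y) x) :=
    BBMAux.rep_curve hV₀C1 hw₀ hx₀ (fun τ x => P₀ (fun y => deriv (ηh τ) y) x)
      (fun τ => hP₀mem _) hηxC1
  have repσ : BBMAux.Rep (fun τ x => P (fun y => deriv (uh τ) y) x) :=
    BBMAux.rep_curve hVC1 hw₁ hx₁ (fun τ x => P (fun y => deriv (uh τ) y) x)
      (fun τ => hPmem _) huxC1
  have repux : BBMAux.Rep (fun τ x => deriv (uh τ) x) :=
    BBMAux.rep_derivx hV₀C1 hw₀ hx₀ uh humem huC1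
  have repηx : BBMAux.Rep (fun τ x => deriv (ηh τ) x) :=
    BBMAux.rep_derivx hVC1 hw₁ hx₁ ηh hηmem hηC1
  have repΓ : BBMAux.Rep (fun τ x => ηh τ x ^ 2 + (1 + ηh τ x) * uh τ x ^ 2) := by
    have h1 : BBMAux.Rep (fun τ x => ηh τ x * ηh τ x + (1 + ηh τ x) * (uh τ x * uh τ x)) :=
      (repη.mul repη).add (((BBMAux.Rep.const 1).add repη).mul (repu.mul repu))
    exact h1.congr (fun t y => by ring)
  -- the semidiscrete energy has zero derivative on [0, T]
  have key : ∀ t ∈ Set.Icc (0 : ℝ) T,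
      (∫ x in a..b, deriv (fun s => ηh s x ^ 2 + (1 + ηh s x) * uh s x ^ 2) t) = 0 := by
    intro t ht
    -- memberships of pointwise time derivatives
    have F1 : (fun x => deriv (fun τ => ηh τ x) t) ∈ V :=
      BBMAux.pderiv_mem hVC1 hw₁ hx₁ ηh hηmem hηC1 t
    have F2 : (fun x => deriv (fun τ => uh τ x) t) ∈ V₀ :=
      BBMAux.pderiv_mem hV₀C1 hw₀ hx₀ uh humem huC1 t
    have F3 : (fun x => deriv (fun τ => P₀ (fun y => deriv (ηh τ) y) x) t) ∈ V₀ :=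
      BBMAux.pderiv_mem hV₀C1 hw₀ hx₀ (fun τ x => P₀ (fun y => deriv (ηh τ) y) x)
        (fun τ => hP₀mem _) hηxC1 t
    have F4 : (fun x => deriv (fun τ => P (fun y => deriv (uh τ) y) x) t) ∈ V :=
      BBMAux.pderiv_mem hVC1 hw₁ hx₁ (fun τ x => P (fun y => deriv (uh τ) y) x)
        (fun τ => hPmem _) huxC1 t
    -- continuity facts
    have cA : Continuous (fun x => deriv (fun τ => ηh τ x) t) := (hVC1 _ F1).continuous
    have cB : Continuous (fun x => deriv (fun τ => uh τ x) t) := (hV₀C1 _ F2).continuous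
    have cθ : Continuous (fun x => deriv (fun τ => P₀ (fun y => deriv (ηh τ) y) x) t) :=
      (hV₀C1 _ F3).continuous
    have cσ : Continuous (fun x => deriv (fun τ => P (fun y => deriv (uh τ) y) x) t) :=
      (hVC1 _ F4).continuous
    have cη : Continuous (ηh t) := (hVC1 _ (hηmem t)).continuous
    have cu : Continuous (uh t) := (hV₀C1 _ (humem t)).continuous
    have cPu2 : Continuous (P (fun y => uh t y ^ 2)) := (hVC1 _ (hPmem _)).continuous
    have cPη : Continuous (P (ηh t)) := (hVC1 _ (hPmem _)).continuous
    have cP0f : Continuous (P₀ (fun y => (1 + ηh t y) * uh t y)) :=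
      (hV₀C1 _ (hP₀mem _)).continuous
    -- the test functions
    set Q : ℝ → ℝ := fun x => -(1/2) * P (fun y => uh t y ^ 2) x - P (ηh t) x
        + 1/6 * deriv (fun τ => P (fun y => deriv (uh τ) y) x) t with hQdef
    set R : ℝ → ℝ := fun x => -(P₀ (fun y => (1 + ηh t y) * uh t y) x)
        + 1/6 * deriv (fun τ => P₀ (fun y => deriv (ηh τ) y) x) t with hRdef
    have hQmem : Q ∈ V := by
      have hQeq : Q = ((-(1/2) : ℝ) • P (fun y => uh t y ^ 2) - P (ηh t))
          + (1/6 : ℝ) • (fun x => deriv (fun τ => P (fun y => deriv (uh τ) y) x) t) := by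
        funext x
        simp only [hQdef, Pi.add_apply, Pi.sub_apply, Pi.smul_apply, smul_eq_mul]
      rw [hQeq]
      exact V.add_mem (V.sub_mem (V.smul_mem _ (hPmem _)) (hPmem _)) (V.smul_mem _ F4)
    have hRmem : R ∈ V₀ := by
      have hReq : R = (-(P₀ (fun y => (1 + ηh t y) * uh t y)))
          + (1/6 : ℝ) • (fun x => deriv (fun τ => P₀ (fun y => deriv (ηh τ) y) x) t) := by
        funext x
        simp only [hRdef, Pi.add_apply, Pi.neg_apply, Pi.smul_apply, smul_eq_mul]
      rw [hReq]
      exact V₀.add_mem (V₀.neg_mem (hP₀mem _)) (V₀.smul_mem _ F3)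
    have hQC1 : ContDiff ℝ 1 Q := hVC1 _ hQmem
    have hRC1 : ContDiff ℝ 1 R := hV₀C1 _ hRmem
    have hRa : R a = 0 := (hV₀bc _ hRmem).1
    have hRb : R b = 0 := (hV₀bc _ hRmem).2
    have E1 := heq1 t ht Q hQmem
    have E2 := heq2 t ht R hRmem
    -- integration by parts for Q·R
    have hIBP : (∫ x in a..b, (deriv Q x * R x + Q x * deriv R x)) = 0 := by
      rw [BBMAux.ibp a b Q R hQC1 hRC1, hRa, hRb]
      ring
    have hIBPsplit : (∫ x in a..b, (deriv Q x * R x + Q x * deriv R x))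
        = (∫ x in a..b, R x * deriv Q x) + ∫ x in a..b, Q x * deriv R x := by
      have h1 : ∀ x, deriv Q x * R x + Q x * deriv R x
          = R x * deriv Q x + Q x * deriv R x := fun x => by ring
      rw [BBMAux.integral_funcongr a b h1]
      exact BBMAux.integral_split2 a b _ _
        (hRC1.continuous.mul (hQC1.continuous_deriv le_rfl))
        (hQC1.continuous.mul (hRC1.continuous_deriv le_rfl))
    have hRQ' : (∫ x in a..b, R x * deriv Q x)
        = (-1) * (∫ x in a..b, P₀ (fun y => (1 + ηh t y) * uh t y) x * deriv Q x)
          + (1/6) * ∫ x in a..b,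
              deriv (fun τ => P₀ (fun y => deriv (ηh τ) y) x) t * deriv Q x := by
      have h1 : ∀ x, R x * deriv Q x
          = (-1) * (P₀ (fun y => (1 + ηh t y) * uh t y) x * deriv Q x)
            + (1/6) * (deriv (fun τ => P₀ (fun y => deriv (ηh τ) y) x) t * deriv Q x) := by
        intro x; simp only [hRdef]; ring
      rw [BBMAux.integral_funcongr a b h1]
      exact BBMAux.integral_combo2 a b _ _ _ _
        (cP0f.mul (hQC1.continuous_deriv le_rfl)) (cθ.mul (hQC1.continuous_deriv le_rfl))
    have hQR' : (∫ x in a..b, Q x * deriv R x)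
        = (-(1/2)) * (∫ x in a..b, P (fun y => uh t y ^ 2) x * deriv R x)
          + (-1) * (∫ x in a..b, P (ηh t) x * deriv R x)
          + (1/6) * ∫ x in a..b,
              deriv (fun τ => P (fun y => deriv (uh τ) y) x) t * deriv R x := by
      have h1 : ∀ x, Q x * deriv R x
          = (-(1/2)) * (P (fun y => uh t y ^ 2) x * deriv R x)
            + (-1) * (P (ηh t) x * deriv R x)
            + (1/6) * (deriv (fun τ => P (fun y => deriv (uh τ) y) x) t * deriv R x) := by
        intro x; simp only [hQdef]; ring
      rw [BBMAux.integral_funcongr a b h1]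
      exact BBMAux.integral_combo3 a b _ _ _ _ _ _
        (cPu2.mul (hRC1.continuous_deriv le_rfl)) (cPη.mul (hRC1.continuous_deriv le_rfl))
        (cσ.mul (hRC1.continuous_deriv le_rfl))
    -- expansions of the left-hand sides of E1, E2
    have hQsplit : (∫ x in a..b, deriv (fun s => ηh s x) t * Q x)
        = (-(1/2)) * (∫ x in a..b, P (fun y => uh t y ^ 2) x * deriv (fun τ => ηh τ x) t)
          + (-1) * (∫ x in a..b, P (ηh t) x * deriv (fun τ => ηh τ x) t)
          + (1/6) * ∫ x in a..b,
              deriv (fun τ => P (fun y => deriv (uh τ) y) x) t * deriv (fun τ => ηh τ x) t := by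
      have h1 : ∀ x, deriv (fun s => ηh s x) t * Q x
          = (-(1/2)) * (P (fun y => uh t y ^ 2) x * deriv (fun τ => ηh τ x) t)
            + (-1) * (P (ηh t) x * deriv (fun τ => ηh τ x) t)
            + (1/6) * (deriv (fun τ => P (fun y => deriv (uh τ) y) x) t
                * deriv (fun τ => ηh τ x) t) := by
        intro x; simp only [hQdef]; ring
      rw [BBMAux.integral_funcongr a b h1]
      exact BBMAux.integral_combo3 a b _ _ _ _ _ _ (cPu2.mul cA) (cPη.mul cA) (cσ.mul cA)
    have hRsplit : (∫ x in a..b, deriv (fun s => uh s x) t * R x)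
        = (-1) * (∫ x in a..b, P₀ (fun y => (1 + ηh t y) * uh t y) x * deriv (fun τ => uh τ x) t)
          + (1/6) * ∫ x in a..b,
              deriv (fun τ => P₀ (fun y => deriv (ηh τ) y) x) t * deriv (fun τ => uh τ x) t := by
      have h1 : ∀ x, deriv (fun s => uh s x) t * R x
          = (-1) * (P₀ (fun y => (1 + ηh t y) * uh t y) x * deriv (fun τ => uh τ x) t)
            + (1/6) * (deriv (fun τ => P₀ (fun y => deriv (ηh τ) y) x) t
                * deriv (fun τ => uh τ x) t) := by
        intro x; simp only [hRdef]; ring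
      rw [BBMAux.integral_funcongr a b h1]
      exact BBMAux.integral_combo2 a b _ _ _ _ (cP0f.mul cB) (cθ.mul cB)
    -- projection identities
    have hp1 : (∫ x in a..b, P (fun y => uh t y ^ 2) x * deriv (fun τ => ηh τ x) t)
        = ∫ x in a..b, uh t x ^ 2 * deriv (fun τ => ηh τ x) t := hPproj _ _ F1
    have hp2 : (∫ x in a..b, P (ηh t) x * deriv (fun τ => ηh τ x) t)
        = ∫ x in a..b, ηh t x * deriv (fun τ => ηh τ x) t := hPproj _ _ F1
    have hp3 : (∫ x in a..b, P₀ (fun y => (1 + ηh t y) * uh t y) x * deriv (fun τ => uh τ x) t)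
        = ∫ x in a..b, (1 + ηh t x) * uh t x * deriv (fun τ => uh τ x) t := hP₀proj _ _ F2
    -- time derivative of the projection identities (cross terms)
    have G1 : (fun τ => ∫ x in a..b,
          P (fun y => deriv (uh τ) y) x * deriv (fun τ' => ηh τ' x) t)
        = (fun τ => ∫ x in a..b, deriv (uh τ) x * deriv (fun τ' => ηh τ' x) t) := by
      funext τ; exact hPproj _ _ F1
    have H1 : HasDerivAt
        (fun τ => ∫ x in a..b, P (fun y => deriv (uh τ) y) x * deriv (fun τ' => ηh τ' x) t)
        (∫ x in a..b, deriv (fun τ => P (fun y => deriv (uh τ) y) x) t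
          * deriv (fun τ' => ηh τ' x) t) t := by
      have h0 := (repσ.mul (BBMAux.Rep.ofFun cA)).hasDerivAt_integral a b t
      have e : (∫ x in a..b, deriv (fun s =>
            P (fun y => deriv (uh s) y) x * deriv (fun τ' => ηh τ' x) t) t)
          = ∫ x in a..b, deriv (fun τ => P (fun y => deriv (uh τ) y) x) t
              * deriv (fun τ' => ηh τ' x) t :=
        BBMAux.integral_funcongr a b fun x =>
          ((((huxC1 x).differentiable one_ne_zero t).hasDerivAt).mul_const _).deriv
      rw [← e]
      exact h0
    have H2 : HasDerivAt
        (fun τ => ∫ x in a..b, deriv (uh τ) x * deriv (fun τ' => ηh τ' x) t)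
        (∫ x in a..b, deriv (fun τ => deriv (uh τ) x) t * deriv (fun τ' => ηh τ' x) t) t := by
      have h0 := (repux.mul (BBMAux.Rep.ofFun cA)).hasDerivAt_integral a b t
      have e : (∫ x in a..b, deriv (fun s =>
            deriv (uh s) x * deriv (fun τ' => ηh τ' x) t) t)
          = ∫ x in a..b, deriv (fun τ => deriv (uh τ) x) t * deriv (fun τ' => ηh τ' x) t :=
        BBMAux.integral_funcongr a b fun x =>
          ((repux.hasDerivAt_pt t x).mul_const _).deriv
      rw [← e]
      exact h0
    have S1 : (∫ x in a..b, deriv (fun τ => P (fun y => deriv (uh τ) y) x) t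
          * deriv (fun τ' => ηh τ' x) t)
        = ∫ x in a..b, deriv (fun τ => deriv (uh τ) x) t * deriv (fun τ' => ηh τ' x) t := by
      apply H1.unique
      rw [G1]
      exact H2
    have G2 : (fun τ => ∫ x in a..b,
          P₀ (fun y => deriv (ηh τ) y) x * deriv (fun τ' => uh τ' x) t)
        = (fun τ => ∫ x in a..b, deriv (ηh τ) x * deriv (fun τ' => uh τ' x) t) := by
      funext τ; exact hP₀proj _ _ F2
    have H3 : HasDerivAt
        (fun τ => ∫ x in a..b, P₀ (fun y => deriv (ηh τ) y) x * deriv (fun τ' => uh τ' x) t)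
        (∫ x in a..b, deriv (fun τ => P₀ (fun y => deriv (ηh τ) y) x) t
          * deriv (fun τ' => uh τ' x) t) t := by
      have h0 := (repθ.mul (BBMAux.Rep.ofFun cB)).hasDerivAt_integral a b t
      have e : (∫ x in a..b, deriv (fun s =>
            P₀ (fun y => deriv (ηh s) y) x * deriv (fun τ' => uh τ' x) t) t)
          = ∫ x in a..b, deriv (fun τ => P₀ (fun y => deriv (ηh τ) y) x) t
              * deriv (fun τ' => uh τ' x) t :=
        BBMAux.integral_funcongr a b fun x =>
          ((((hηxC1 x).differentiable one_ne_zero t).hasDerivAt).mul_const _).deriv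
      rw [← e]
      exact h0
    have H4 : HasDerivAt
        (fun τ => ∫ x in a..b, deriv (ηh τ) x * deriv (fun τ' => uh τ' x) t)
        (∫ x in a..b, deriv (fun τ => deriv (ηh τ) x) t * deriv (fun τ' => uh τ' x) t) t := by
      have h0 := (repηx.mul (BBMAux.Rep.ofFun cB)).hasDerivAt_integral a b t
      have e : (∫ x in a..b, deriv (fun s =>
            deriv (ηh s) x * deriv (fun τ' => uh τ' x) t) t)
          = ∫ x in a..b, deriv (fun τ => deriv (ηh τ) x) t * deriv (fun τ' => uh τ' x) t :=
        BBMAux.integral_funcongr a b fun x =>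
          ((repηx.hasDerivAt_pt t x).mul_const _).deriv
      rw [← e]
      exact h0
    have S2 : (∫ x in a..b, deriv (fun τ => P₀ (fun y => deriv (ηh τ) y) x) t
          * deriv (fun τ' => uh τ' x) t)
        = ∫ x in a..b, deriv (fun τ => deriv (ηh τ) x) t * deriv (fun τ' => uh τ' x) t := by
      apply H3.unique
      rw [G2]
      exact H4
    -- mixed partials
    have M1 : ∀ x : ℝ, deriv (fun x' => deriv (fun τ => ηh τ x') t) x
        = deriv (fun τ => deriv (ηh τ) x) t := fun x =>
      BBMAux.mixed_partial hVC1 hw₁ hx₁ ηh hηmem hηC1 t x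
    have M2 : ∀ x : ℝ, deriv (fun x' => deriv (fun τ => uh τ x') t) x
        = deriv (fun τ => deriv (uh τ) x) t := fun x =>
      BBMAux.mixed_partial hV₀C1 hw₀ hx₀ uh humem huC1 t x
    -- boundary cancellation of the cross terms
    have h0bc : (∫ x in a..b, (deriv (fun x' => deriv (fun τ => ηh τ x') t) x
          * deriv (fun τ => uh τ x) t
        + deriv (fun τ => ηh τ x) t * deriv (fun x' => deriv (fun τ => uh τ x') t) x))
        = deriv (fun τ => ηh τ b) t * deriv (fun τ => uh τ b) t
          - deriv (fun τ => ηh τ a) t * deriv (fun τ => uh τ a) t :=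
      BBMAux.ibp a b (fun x => deriv (fun τ => ηh τ x) t)
        (fun x => deriv (fun τ => uh τ x) t) (hVC1 _ F1) (hV₀C1 _ F2)
    have hBa : deriv (fun τ => uh τ a) t = 0 := (hV₀bc _ F2).1
    have hBb : deriv (fun τ => uh τ b) t = 0 := (hV₀bc _ F2).2
    have hABbc : (∫ x in a..b, (deriv (fun x' => deriv (fun τ => ηh τ x') t) x
          * deriv (fun τ => uh τ x) t
        + deriv (fun τ => ηh τ x) t * deriv (fun x' => deriv (fun τ => uh τ x') t) x)) = 0 := by
      rw [h0bc, hBa, hBb]; ring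
    have hcrossSplit : (∫ x in a..b, (deriv (fun x' => deriv (fun τ => ηh τ x') t) x
          * deriv (fun τ => uh τ x) t
        + deriv (fun τ => ηh τ x) t * deriv (fun x' => deriv (fun τ => uh τ x') t) x))
        = (∫ x in a..b, deriv (fun x' => deriv (fun τ => ηh τ x') t) x
            * deriv (fun τ => uh τ x) t)
          + ∫ x in a..b, deriv (fun τ => ηh τ x) t
            * deriv (fun x' => deriv (fun τ => uh τ x') t) x :=
      BBMAux.integral_split2 a b _ _
        (((hVC1 _ F1).continuous_deriv le_rfl).mul cB)
        (cA.mul ((hV₀C1 _ F2).continuous_deriv le_rfl))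
    have T1 : (∫ x in a..b, deriv (fun τ => deriv (uh τ) x) t * deriv (fun τ' => ηh τ' x) t)
        = ∫ x in a..b, deriv (fun τ => ηh τ x) t
            * deriv (fun x' => deriv (fun τ => uh τ x') t) x :=
      BBMAux.integral_funcongr a b fun x => by rw [M2 x]; ring
    have T2 : (∫ x in a..b, deriv (fun τ => deriv (ηh τ) x) t * deriv (fun τ' => uh τ' x) t)
        = ∫ x in a..b, deriv (fun x' => deriv (fun τ => ηh τ x') t) x
            * deriv (fun τ => uh τ x) t :=
      BBMAux.integral_funcongr a b fun x => by rw [M1 x]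
    have hcross : (∫ x in a..b, deriv (fun τ => P (fun y => deriv (uh τ) y) x) t
          * deriv (fun τ' => ηh τ' x) t)
        + (∫ x in a..b, deriv (fun τ => P₀ (fun y => deriv (ηh τ) y) x) t
          * deriv (fun τ' => uh τ' x) t) = 0 := by
      rw [S1, S2, T1, T2]
      linarith [hABbc, hcrossSplit]
    -- pointwise derivative of the energy integrand
    have hd : ∀ x : ℝ, deriv (fun s => ηh s x ^ 2 + (1 + ηh s x) * uh s x ^ 2) t
        = 2 * (ηh t x * deriv (fun τ => ηh τ x) t)
          + 1 * (uh t x ^ 2 * deriv (fun τ => ηh τ x) t)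
          + 2 * ((1 + ηh t x) * uh t x * deriv (fun τ => uh τ x) t) := by
      intro x
      have hη : HasDerivAt (fun s => ηh s x) (deriv (fun τ => ηh τ x) t) t :=
        (((hηC1 x).differentiable one_ne_zero) t).hasDerivAt
      have hu : HasDerivAt (fun s => uh s x) (deriv (fun τ => uh τ x) t) t :=
        (((huC1 x).differentiable one_ne_zero) t).hasDerivAt
      have hD := (hη.pow 2).add (((hasDerivAt_const t (1:ℝ)).add hη).mul (hu.pow 2))
      have h2 : deriv (fun s => ηh s x ^ 2 + (1 + ηh s x) * uh s x ^ 2) t = _ := hD.deriv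
      rw [h2]
      push_cast
      simp only [Pi.add_apply, Pi.pow_apply]
      ring
    have hfinal : (∫ x in a..b, deriv (fun s => ηh s x ^ 2 + (1 + ηh s x) * uh s x ^ 2) t)
        = 2 * (∫ x in a..b, ηh t x * deriv (fun τ => ηh τ x) t)
          + 1 * (∫ x in a..b, uh t x ^ 2 * deriv (fun τ => ηh τ x) t)
          + 2 * ∫ x in a..b, (1 + ηh t x) * uh t x * deriv (fun τ => uh τ x) t := by
      rw [BBMAux.integral_funcongr a b hd]
      exact BBMAux.integral_combo3 a b _ _ _ _ _ _ (cη.mul cA) ((cu.pow 2).mul cA)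
        (((continuous_const.add cη).mul cu).mul cB)
    rw [hfinal]
    linarith [E1, E2, hQsplit, hRsplit, hp1, hp2, hp3, hIBP, hIBPsplit, hRQ', hQR', hcross]
  -- from zero derivative to constancy
  intro t₁ ht₁ t₂ ht₂
  have hconst : ∀ u₁, u₁ ∈ Set.Icc (0:ℝ) T → ∀ u₂, u₂ ∈ Set.Icc (0:ℝ) T → u₁ < u₂ →
      (∫ x in a..b, (ηh u₁ x ^ 2 + (1 + ηh u₁ x) * uh u₁ x ^ 2))
        = ∫ x in a..b, (ηh u₂ x ^ 2 + (1 + ηh u₂ x) * uh u₂ x ^ 2) := by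
    intro u₁ hu₁ u₂ hu₂ hlt
    have hD : ∀ τ : ℝ, HasDerivAt
        (fun τ' => ∫ x in a..b, (ηh τ' x ^ 2 + (1 + ηh τ' x) * uh τ' x ^ 2))
        (∫ x in a..b, deriv (fun s => ηh s x ^ 2 + (1 + ηh s x) * uh s x ^ 2) τ) τ :=
      fun τ => repΓ.hasDerivAt_integral a b τ
    have hcont : ContinuousOn
        (fun τ' => ∫ x in a..b, (ηh τ' x ^ 2 + (1 + ηh τ' x) * uh τ' x ^ 2))
        (Set.Icc u₁ u₂) :=
      (Differentiable.continuous fun τ => (hD τ).differentiableAt).continuousOn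
    obtain ⟨c, hc, hc0⟩ := exists_hasDerivAt_eq_slope
      (fun τ' => ∫ x in a..b, (ηh τ' x ^ 2 + (1 + ηh τ' x) * uh τ' x ^ 2))
      (fun _ => (0:ℝ)) hlt hcont (fun c hc => by
        have h := hD c
        rw [key c ⟨le_trans hu₁.1 (le_of_lt hc.1), le_trans (le_of_lt hc.2) hu₂.2⟩] at h
        exact h)
    have hne : u₂ - u₁ ≠ 0 := sub_ne_zero.2 hlt.ne'
    have h0 : (∫ x in a..b, (ηh u₂ x ^ 2 + (1 + ηh u₂ x) * uh u₂ x ^ 2))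
        - ∫ x in a..b, (ηh u₁ x ^ 2 + (1 + ηh u₁ x) * uh u₁ x ^ 2) = 0 := by
      have := hc0.symm
      rw [div_eq_zero_iff] at this
      rcases this with h | h
      · exact h
      · exact absurd h hne
    linarith
  rcases lt_trichotomy t₁ t₂ with h | h | h
  · rw [hconst t₁ ht₁ t₂ ht₂ h]
  · rw [h]
  · rw [hconst t₂ ht₂ t₁ ht₁ h]
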